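/- For λ ∈ (0,1] and r ∈ (r_*, 1/5), where r_* is the unique root of 5r³−9r²−5r+1 in (0,1/5), one has ∂Φ/∂r (λ,r) = 24r²λ² − (39r² + 14r − 5)λ + 30r² − 4r − 10 < 0. -/

import Mathlib

theorem Phi_deriv_r_neg (rstar : ℝ) (hstar : rstar ∈ Set.Ioo (0:ℝ) (1/5))
    (hroot : 5*rstar^3 - 9*rstar^2 - 5*rstar + 1 = 0)
    (huniq : ∀ r ∈ Set.Ioo (0:ℝ) (1/5), 5*r^3 - 9*r^2 - 5*r + 1 = 0 → r = rstar)
    (l r : ℝ) (hl : l ∈ Set.Ioc (0:ℝ) 1) (hr : r ∈ Set.Ioo rstar (1/5:ℝ)) :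
    deriv (fun r : ℝ => 8*r^3*l^2 - ((1-5*r)*(1-r^2) + 8*r^2*(1+r))*l
        + 2*(1-5*r)*(1-r^2)) r
      = 24*r^2*l^2 - (39*r^2 + 14*r - 5)*l + 30*r^2 - 4*r - 10 ∧
    24*r^2*l^2 - (39*r^2 + 14*r - 5)*l + 30*r^2 - 4*r - 10 < 0 := by
  have hr0 : 0 < r := lt_trans hstar.1 hr.1
  constructor
  · have h1 : HasDerivAt (fun x : ℝ => (8*l^2-13*l+10)*x^3 + (-7*l-2)*x^2 + (5*l-10)*x + (2-l))
          ((8*l^2-13*l+10)*(3*r^2) + (-7*l-2)*(2*r) + (5*l-10)) r := by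
        have hp3 := (hasDerivAt_pow 3 r).const_mul (8*l^2-13*l+10)
        have hp2 := (hasDerivAt_pow 2 r).const_mul (-7*l-2)
        have hp1 := (hasDerivAt_id r).const_mul (5*l-10)
        have := ((hp3.add hp2).add hp1).add_const (2-l)
        convert this using 1
        · rfl
        · rfl
        · funext x; simp only [Pi.add_apply, id]
        · push_cast
          ring
    have heq : (fun r : ℝ => 8*r^3*l^2 - ((1-5*r)*(1-r^2) + 8*r^2*(1+r))*l
        + 2*(1-5*r)*(1-r^2)) =
        (fun x : ℝ => (8*l^2-13*l+10)*x^3 + (-7*l-2)*x^2 + (5*l-10)*x + (2-l)) := by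
      funext x; ring
    rw [heq, h1.deriv]; ring
  · obtain ⟨hl0, hl1⟩ := hl
    obtain ⟨_, hr5⟩ := hr
    nlinarith [sq_nonneg r, sq_nonneg l, mul_pos hr0 hl0, sq_nonneg (1-l),
      mul_nonneg (sq_nonneg r) (sub_nonneg.mpr hl1), mul_pos hr0 hr0,
      mul_nonneg (mul_nonneg hr0.le hr0.le) hl0.le]
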